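/- arXiv:2208.08692 — 2 statements merged into one kernel-verified Lean document; each statement's English description precedes it below -/
import Mathlib

section
/- If a chord diagram τ of order n satisfies n + 1 − F(τ) ≤ 2 (the associated hieroglyph is realizable on the torus), then τ contains none of the four forbidden diagrams (ababcdcd), (abcdabcd), (abacdcbd), (abcadbdc). -/
/-- Strict cyclic betweenness on the cyclic group with `m` elements (`ZMod m`, realized as
`Fin m` so that the group is empty when `m = 0`): `b` lies on the open cyclic arc
from `a` to `c`. -/
def cyclicSbtw {m : ℕ} (a b c : Fin m) : Prop :=
  0 < (b.val + (m - a.val)) % m ∧ (b.val + (m - a.val)) % m < (c.val + (m - a.val)) % m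

/-- A chord diagram of order `n`: a fixed-point-free involution `τ` of the cyclic group
with `2n` elements (`ZMod (2n)`, realized as `Fin (2n)`); its chords are the pairs
`{i, τ i}`. -/
structure ChordDiagram (n : ℕ) where
  τ : Equiv.Perm (Fin (2 * n))
  invol : ∀ i, τ (τ i) = i
  fpf : ∀ i, τ i ≠ i

namespace ChordDiagram

/-- The boundary permutation `φ(i) = τ(i) + 1`. -/
def boundary {n : ℕ} (D : ChordDiagram n) : Equiv.Perm (Fin (2 * n)) :=
  D.τ.trans (finRotate (2 * n))

/-- The number `F` of boundary components: the number of orbits of the boundary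
permutation, with the convention `F = 1` when `n = 0`. -/
noncomputable def F {n : ℕ} (D : ChordDiagram n) : ℕ :=
  if n = 0 then 1
  else Nat.card (Quotient (MulAction.orbitRel (Subgroup.zpowers D.boundary) (Fin (2 * n))))

/-- Build a chord diagram from an involutive, fixed-point-free function. -/
def ofInvol {n : ℕ} (f : Fin (2 * n) → Fin (2 * n)) (h : Function.Involutive f)
    (hf : ∀ i, f i ≠ i) : ChordDiagram n :=
  ⟨Function.Involutive.toPerm f h, h, hf⟩

/-- The empty chord diagram (order 0). -/
def emptyDiagram : ChordDiagram 0 := ⟨1, fun i => i.elim0, fun i => i.elim0⟩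

/-- The chord diagram `(abab)`: chords `{0,2}, {1,3}` on `ZMod 4`. -/
def abab : ChordDiagram 2 := ofInvol ![2, 3, 0, 1] (by intro x; fin_cases x <;> rfl) (by decide)

/-- The chord diagram `(abcabc)`: chords `{0,3}, {1,4}, {2,5}` on `ZMod 6`. -/
def abcabc : ChordDiagram 3 :=
  ofInvol ![3, 4, 5, 0, 1, 2] (by intro x; fin_cases x <;> rfl) (by decide)

/-- The forbidden diagram `(ababcdcd)`: chords `{0,2},{1,3},{4,6},{5,7}` on `ZMod 8`. -/
def ababcdcd : ChordDiagram 4 :=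
  ofInvol ![2, 3, 0, 1, 6, 7, 4, 5] (by intro x; fin_cases x <;> rfl) (by decide)

/-- The forbidden diagram `(abcdabcd)`: chords `{0,4},{1,5},{2,6},{3,7}` on `ZMod 8`. -/
def abcdabcd : ChordDiagram 4 :=
  ofInvol ![4, 5, 6, 7, 0, 1, 2, 3] (by intro x; fin_cases x <;> rfl) (by decide)

/-- The forbidden diagram `(abacdcbd)`: chords `{0,2},{1,6},{3,5},{4,7}` on `ZMod 8`. -/
def abacdcbd : ChordDiagram 4 :=
  ofInvol ![2, 6, 0, 5, 7, 3, 1, 4] (by intro x; fin_cases x <;> rfl) (by decide)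

/-- The forbidden diagram `(abcadbdc)`: chords `{0,3},{1,5},{2,7},{4,6}` on `ZMod 8`. -/
def abcadbdc : ChordDiagram 4 :=
  ofInvol ![3, 5, 7, 0, 6, 1, 4, 2] (by intro x; fin_cases x <;> rfl) (by decide)

/-- The chords `{i, τ i}` and `{j, τ j}` interlace: exactly one of `j, τ j` lies on
the open cyclic arc from `i` to `τ i`. -/
def Interlaces {n : ℕ} (D : ChordDiagram n) (i j : Fin (2 * n)) : Prop :=
  Xor' (cyclicSbtw i j (D.τ i)) (cyclicSbtw i (D.τ j) (D.τ i))

/-- The type of chords of a chord diagram. -/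
def Chord {n : ℕ} (D : ChordDiagram n) : Type :=
  {p : Sym2 (Fin (2 * n)) // ∃ i, p = s(i, D.τ i)}

/-- The interlacement graph (graph of loops) of a chord diagram: vertices are the chords,
edges are the interlacing pairs of distinct chords. -/
def interGraph {n : ℕ} (D : ChordDiagram n) : SimpleGraph D.Chord where
  Adj c d := c ≠ d ∧
    ((∃ i j, c.1 = s(i, D.τ i) ∧ d.1 = s(j, D.τ j) ∧ D.Interlaces i j) ∨
     (∃ i j, d.1 = s(i, D.τ i) ∧ c.1 = s(j, D.τ j) ∧ D.Interlaces i j))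
  symm := by
    refine ⟨fun c d h => ?_⟩
    exact ⟨h.1.symm, h.2.symm⟩
  loopless := by
    refine ⟨fun c h => ?_⟩
    exact h.1 rfl

/-- A cyclic-order-preserving injection between cyclic groups. -/
def CycEmb {k m : ℕ} (f : Fin k → Fin m) : Prop :=
  Function.Injective f ∧ ∀ a b c, cyclicSbtw a b c → cyclicSbtw (f a) (f b) (f c)

/-- `D` contains the diagram `P`: the sub-diagram of `D` induced by some set of its chords
equals `P` up to rotation, i.e. there is a cyclic-order-preserving injection
`f : ZMod (2k) → ZMod (2n)` intertwining the involutions. -/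
def Contains {n k : ℕ} (D : ChordDiagram n) (P : ChordDiagram k) : Prop :=
  ∃ f : Fin (2 * k) → Fin (2 * n), CycEmb f ∧ ∀ i, D.τ (f i) = f (P.τ i)

/-- `D'` is obtained from `D` by deleting the chord `{j, τ j}` and renumbering the
remaining `2n` endpoints by the cyclic-order-preserving bijection onto `ZMod (2n)`. -/
def DeleteChord {n : ℕ} (D : ChordDiagram (n + 1)) (j : Fin (2 * (n + 1)))
    (D' : ChordDiagram n) : Prop :=
  ∃ f : Fin (2 * n) → Fin (2 * (n + 1)), CycEmb f ∧
    Set.range f = ({j, D.τ j} : Set (Fin (2 * (n + 1))))ᶜ ∧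
    ∀ i, D.τ (f i) = f (D'.τ i)

/-- Reduction operation (α): deletion of an isolated chord `{i, i+1}` (where `τ i = i + 1`). -/
def StepAlpha {n : ℕ} (D : ChordDiagram (n + 1)) (D' : ChordDiagram n) : Prop :=
  ∃ i, D.τ i = finRotate (2 * (n + 1)) i ∧ DeleteChord D i D'

/-- Reduction operation (β): deletion of the chord `{i+1, τ(i+1)}` from a parallel pair,
i.e. `τ(i+1) = τ(i) - 1` with the chords `{i, τ i}` and `{i+1, τ(i+1)}` distinct. -/
def StepBeta {n : ℕ} (D : ChordDiagram (n + 1)) (D' : ChordDiagram n) : Prop :=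
  ∃ i, D.τ (finRotate (2 * (n + 1)) i) = (finRotate (2 * (n + 1))).symm (D.τ i) ∧
    D.τ i ≠ finRotate (2 * (n + 1)) i ∧
    DeleteChord D (finRotate (2 * (n + 1)) i) D'

/-- One reduction step (operation (α) or (β)) between chord diagrams. -/
def Step (p q : Σ n, ChordDiagram n) : Prop :=
  ∃ h : p.1 = q.1 + 1,
    StepAlpha (cast (congrArg ChordDiagram h) p.2) q.2 ∨
    StepBeta (cast (congrArg ChordDiagram h) p.2) q.2

/-- `p` reduces to `q` by finitely many operations (α), (β) (possibly none). -/
def Reduces (p q : Σ n, ChordDiagram n) : Prop := Relation.ReflTransGen Step p q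

/-- `D` reduces to one of the diagrams `()`, `(abab)`, `(abcabc)`. -/
def ReducesToBasic {n : ℕ} (D : ChordDiagram n) : Prop :=
  Reduces ⟨n, D⟩ ⟨0, emptyDiagram⟩ ∨ Reduces ⟨n, D⟩ ⟨2, abab⟩ ∨ Reduces ⟨n, D⟩ ⟨3, abcabc⟩

end ChordDiagram

/-- A simple graph is a disjoint union of a (possibly empty) set of isolated vertices and a
complete bipartite or complete tripartite graph: there are three pairwise disjoint sets
`A`, `B`, `C` of vertices (a part may be empty; `C = ∅` gives the complete bipartite case)
such that two vertices are adjacent iff they lie in two different ones of these parts;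
all remaining vertices are isolated. -/
def IsIsolatedPlusCompleteMultipartite {V : Type*} (G : SimpleGraph V) : Prop :=
  ∃ A B C : Set V, Disjoint A B ∧ Disjoint A C ∧ Disjoint B C ∧
    ∀ v w, G.Adj v w ↔
      ((v ∈ A ∧ w ∈ B) ∨ (v ∈ B ∧ w ∈ A) ∨ (v ∈ A ∧ w ∈ C) ∨ (v ∈ C ∧ w ∈ A) ∨
       (v ∈ B ∧ w ∈ C) ∨ (v ∈ C ∧ w ∈ B))

namespace TorusAux
open Finset Module
open Fin.NatCast

variable {m : ℕ}

lemma finRotate_apply' [NeZero m] (x : Fin m) : finRotate m x = x + 1 := by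
  cases m with
  | zero => exact x.elim0
  | succ k => exact finRotate_succ_apply x

instance (a b c : Fin m) : Decidable (cyclicSbtw a b c) :=
  inferInstanceAs (Decidable (_ ∧ _))

lemma sub_val' (a b : Fin m) : (b.val + (m - a.val)) % m = (b - a).val := by
  rw [Fin.sub_def, Nat.add_comm]

lemma cyclicSbtw_iff (a b c : Fin m) :
    cyclicSbtw a b c ↔ 0 < (b - a).val ∧ (b - a).val < (c - a).val := by
  unfold cyclicSbtw
  rw [sub_val', sub_val']

lemma val_sub [NeZero m] (p q : Fin m) :
    (p - q).val = if q.val ≤ p.val then p.val - q.val else p.val + m - q.val := by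
  have hq : q.val < m := q.is_lt
  have hp : p.val < m := p.is_lt
  rw [Fin.sub_def]
  show (m - q.val + p.val) % m = _
  split_ifs with h
  · rw [show m - q.val + p.val = (p.val - q.val) + m by omega, Nat.add_mod_right,
      Nat.mod_eq_of_lt (by omega)]
  · rw [Nat.mod_eq_of_lt (by omega)]; omega

lemma cyclicSbtw_trichotomy [NeZero m] {a b c : Fin m} (h1 : b ≠ a) (h2 : c ≠ a) (h3 : b ≠ c) :
    cyclicSbtw a b c ∨ cyclicSbtw a c b := by
  have h1' : b.val ≠ a.val := fun h => h1 (Fin.val_inj.mp h)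
  have h2' : c.val ≠ a.val := fun h => h2 (Fin.val_inj.mp h)
  have h3' : b.val ≠ c.val := fun h => h3 (Fin.val_inj.mp h)
  have := a.is_lt; have := b.is_lt; have := c.is_lt
  simp only [cyclicSbtw_iff, val_sub]
  split_ifs <;> omega

lemma cyclicSbtw_asymm {a b c : Fin m} (h : cyclicSbtw a b c) : ¬ cyclicSbtw a c b := by
  rw [cyclicSbtw_iff] at *
  omega

lemma cyclicSbtw_reverse [NeZero m] {a b z : Fin m} (hza : z ≠ a) (hzb : z ≠ b) (hab : a ≠ b) :
    cyclicSbtw b z a ↔ ¬ cyclicSbtw a z b := by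
  have h1' : z.val ≠ a.val := fun h => hza (Fin.val_inj.mp h)
  have h2' : z.val ≠ b.val := fun h => hzb (Fin.val_inj.mp h)
  have h3' : a.val ≠ b.val := fun h => hab (Fin.val_inj.mp h)
  have := a.is_lt; have := b.is_lt; have := z.is_lt
  simp only [cyclicSbtw_iff, val_sub]
  split_ifs <;> omega

variable {n : ℕ} (D : ChordDiagram n)

instance decInter (x y : Fin (2*n)) : Decidable (D.Interlaces x y) :=
  inferInstanceAs (Decidable (Xor _ _))

abbrev Rt : Type := {x : Fin (2*n) // x < D.τ x}

def interM : Matrix (Rt D) (Rt D) (ZMod 2) := fun r s => if D.Interlaces r.1 s.1 then 1 else 0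

variable [NeZero (2*n)]

def invSub : Submodule (ZMod 2) (Fin (2*n) → ZMod 2) where
  carrier := {v | ∀ x, v (x + 1) = v (D.τ x)}
  add_mem' := by intro a b ha hb x; show a (x+1) + b (x+1) = _; rw [ha x, hb x]; rfl
  zero_mem' := by intro x; rfl
  smul_mem' := by intro c a ha x; show c • a (x+1) = _; rw [ha x]; rfl

set_option linter.unusedSectionVars false

lemma telescope (v : Fin (2*n) → ZMod 2) (hv : ∀ x, v (x + 1) = v (D.τ x)) (a : Fin (2*n))
    (j : ℕ) :
    ∑ k ∈ range j, (v (a + (k : Fin (2*n))) + v (D.τ (a + (k : Fin (2*n)))))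
      = v (a + (j : Fin (2*n))) + v a := by
  induction j with
  | zero =>
    have hz : ∀ x : ZMod 2, x + x = 0 := by decide
    simp [hz]
  | succ j ih =>
    rw [Finset.sum_range_succ, ih, show ((j+1:ℕ) : Fin (2*n)) = (j : Fin (2*n)) + 1 by
      push_cast; ring]
    rw [show v (D.τ (a + (j : Fin (2*n)))) = v (a + (j:Fin (2*n)) + 1) from (hv _).symm]
    rw [← add_assoc a (j : Fin (2*n)) 1]
    have h3 : ∀ x y z : ZMod 2, x + y + (x + z) = z + y := by decide
    exact h3 _ _ _

lemma star (v : Fin (2*n) → ZMod 2) (hv : ∀ x, v (x + 1) = v (D.τ x))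
    (a : Fin (2*n)) :
    ∑ y ∈ univ.filter (fun y => cyclicSbtw a y (D.τ a)), (v y + v (D.τ y)) = 0 := by
  set b := D.τ a with hb
  set j := (b - a).val with hj
  have hjm : j < 2*n := (b - a).is_lt
  have hjpos : 0 < j := by
    rcases Nat.eq_zero_or_pos j with h0 | h0
    · exfalso
      have : b - a = 0 := Fin.ext (by simpa [hj] using h0)
      exact D.fpf a (by rwa [sub_eq_zero] at this)
    · exact h0
  have hA : ∑ k ∈ range j, (v (a + (k : Fin (2*n))) + v (D.τ (a + (k : Fin (2*n)))))
      = v b + v a := by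
    rw [telescope D v hv a j]
    congr 2
    rw [hj, Fin.cast_val_eq_self]
    abel
  have hB : ∑ k ∈ range j, (v (a + (k : Fin (2*n))) + v (D.τ (a + (k : Fin (2*n)))))
      = ∑ y ∈ univ.filter (fun y => (y - a).val < j), (v y + v (D.τ y)) := by
    refine Finset.sum_nbij' (fun k => a + (k : Fin (2*n))) (fun y => (y - a).val)
      ?_ ?_ ?_ ?_ ?_
    · intro k hk
      simp only [mem_range] at hk
      simp only [mem_filter, mem_univ, true_and, add_sub_cancel_left, Fin.val_natCast]
      rw [Nat.mod_eq_of_lt (by omega)]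
      omega
    · intro y hy
      simp only [mem_filter, mem_univ, true_and] at hy
      simpa using hy
    · intro k hk
      simp only [mem_range] at hk
      show ((a + (k : Fin (2*n))) - a).val = k
      rw [add_sub_cancel_left, Fin.val_natCast, Nat.mod_eq_of_lt (by omega)]
    · intro y _
      show a + (((y - a).val : ℕ) : Fin (2*n)) = y
      rw [Fin.cast_val_eq_self]
      abel
    · intro k _
      rfl
  have hmain := hB.symm.trans hA
  have hset : univ.filter (fun y : Fin (2*n) => (y - a).val < j)
      = insert a (univ.filter (fun y => 0 < (y - a).val ∧ (y - a).val < j)) := by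
    ext y
    simp only [mem_insert, mem_filter, mem_univ, true_and]
    constructor
    · intro h
      rcases Nat.eq_zero_or_pos (y - a).val with h0 | h0
      · left
        have : y - a = 0 := Fin.ext (by simpa using h0)
        rwa [sub_eq_zero] at this
      · right; exact ⟨h0, h⟩
    · rintro (rfl | ⟨h1, h2⟩)
      · simpa using hjpos
      · exact h2
  have hnotmem : a ∉ univ.filter (fun y : Fin (2*n) => 0 < (y - a).val ∧ (y - a).val < j) := by
    simp only [mem_filter, mem_univ, true_and, sub_self, Fin.val_zero, lt_self_iff_false,
      false_and, not_false_iff]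
  rw [hset, Finset.sum_insert hnotmem] at hmain
  have hfilter : univ.filter (fun y => cyclicSbtw a y (D.τ a))
      = univ.filter (fun y : Fin (2*n) => 0 < (y - a).val ∧ (y - a).val < j) := by
    apply Finset.filter_congr
    intro y _
    rw [← hb, cyclicSbtw_iff, hj]
  rw [hfilter]
  have hz : ∀ x y s : ZMod 2, (x + y) + s = y + x → s = 0 := by decide
  exact hz _ _ _ hmain

lemma pairsum (g : Fin (2*n) → ZMod 2) :
    ∑ y, g y = ∑ r : Rt D, (g r.1 + g (D.τ r.1)) := by
  have h1 : ∑ r : Rt D, (g r.1 + g (D.τ r.1))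
      = ∑ x ∈ univ.filter (fun x => x < D.τ x), (g x + g (D.τ x)) :=
    (Finset.sum_subtype (p := fun x : Fin (2*n) => x < D.τ x)
      (univ.filter (fun x => x < D.τ x)) (fun x => by simp)
      (fun x => g x + g (D.τ x))).symm
  rw [h1, Finset.sum_add_distrib]
  have h2 : ∑ x ∈ univ.filter (fun x => x < D.τ x), g (D.τ x)
      = ∑ x ∈ univ.filter (fun x : Fin (2*n) => ¬ x < D.τ x), g x := by
    refine Finset.sum_nbij' (fun x => D.τ x) (fun x => D.τ x) ?_ ?_ ?_ ?_ ?_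
    · intro x hx
      simp only [mem_filter, mem_univ, true_and] at hx ⊢
      rw [D.invol]
      exact not_lt.mpr hx.le
    · intro x hx
      simp only [mem_filter, mem_univ, true_and] at hx ⊢
      rw [D.invol]
      exact lt_of_le_of_ne (not_lt.mp hx) (D.fpf x)
    · intro x _; exact D.invol x
    · intro x _; exact D.invol x
    · intro x _; rfl
  rw [h2, Finset.sum_filter_add_sum_filter_not]

lemma mem_ker (v : Fin (2*n) → ZMod 2) (hv : ∀ x, v (x + 1) = v (D.τ x)) :
    (interM D).mulVec (fun s : Rt D => v s.1 + v (D.τ s.1)) = 0 := by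
  funext r
  show ∑ s : Rt D, interM D r s * (v s.1 + v (D.τ s.1)) = 0
  have hstar := star D v hv r.1
  rw [Finset.sum_filter] at hstar
  rw [pairsum D (fun y => if cyclicSbtw r.1 y (D.τ r.1) then (v y + v (D.τ y)) else 0)] at hstar
  rw [← hstar]
  apply Finset.sum_congr rfl
  intro s _
  have hz : ∀ x : ZMod 2, x + x = 0 := by decide
  have hee : v (D.τ s.1) + v (D.τ (D.τ s.1)) = v s.1 + v (D.τ s.1) := by
    rw [D.invol]; exact add_comm _ _
  unfold interM ChordDiagram.Interlaces
  by_cases hp : cyclicSbtw r.1 s.1 (D.τ r.1) <;>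
    by_cases hq : cyclicSbtw r.1 (D.τ s.1) (D.τ r.1) <;>
    simp [Xor', hp, hq, hee, hz]

lemma inj_lemma (v : Fin (2*n) → ZMod 2) (hv : ∀ x, v (x+1) = v (D.τ x))
    (h0 : v 0 = 0) (he : ∀ r : Rt D, v r.1 + v (D.τ r.1) = 0) : v = 0 := by
  have hz : ∀ a b : ZMod 2, a + b = 0 → b = a := by decide
  have hτ : ∀ y, v (D.τ y) = v y := by
    intro y
    rcases lt_trichotomy y (D.τ y) with h | h | h
    · exact hz _ _ (he ⟨y, h⟩)
    · exact absurd h.symm (D.fpf y)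
    · have h' : D.τ y < D.τ (D.τ y) := by rw [D.invol]; exact h
      have h2 := he ⟨D.τ y, h'⟩
      rw [D.invol] at h2
      exact (hz _ _ h2).symm
  have hsucc : ∀ y, v (y + 1) = v y := fun y => (hv y).trans (hτ y)
  have hnat : ∀ k : ℕ, v (k : Fin (2*n)) = 0 := by
    intro k
    induction k with
    | zero => simpa using h0
    | succ k ih =>
      rw [show ((k+1:ℕ) : Fin (2*n)) = (k : Fin (2*n)) + 1 by push_cast; ring, hsucc, ih]
  funext y
  show v y = 0
  have := hnat y.val
  rwa [Fin.cast_val_eq_self] at this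

lemma card_Rt : Fintype.card (Rt D) = n := by
  have hc : Fintype.card (Rt D) = (univ.filter (fun x : Fin (2*n) => x < D.τ x)).card :=
    Fintype.card_subtype _
  have h2 : (univ.filter (fun x : Fin (2*n) => x < D.τ x)).card
      = (univ.filter (fun x : Fin (2*n) => ¬ x < D.τ x)).card := by
    refine Finset.card_nbij' (fun x => D.τ x) (fun x => D.τ x) ?_ ?_ ?_ ?_
    · intro x hx
      simp only [mem_coe, mem_filter, mem_univ, true_and] at hx ⊢
      rw [D.invol]
      exact not_lt.mpr hx.le
    · intro x hx
      simp only [mem_coe, mem_filter, mem_univ, true_and] at hx ⊢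
      rw [D.invol]
      exact lt_of_le_of_ne (not_lt.mp hx) (D.fpf x)
    · intro x _; exact D.invol x
    · intro x _; exact D.invol x
  have h3 := Finset.card_filter_add_card_filter_not
    (s := (univ : Finset (Fin (2*n)))) (fun x : Fin (2*n) => x < D.τ x)
  rw [Finset.card_univ, Fintype.card_fin] at h3
  omega

lemma card_orbits_le :
    Nat.card (Quotient (MulAction.orbitRel (Subgroup.zpowers D.boundary) (Fin (2 * n))))
      ≤ Module.finrank (ZMod 2) (invSub D) := by
  classical
  set Q := Quotient (MulAction.orbitRel (Subgroup.zpowers D.boundary) (Fin (2*n))) with hQ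
  haveI : Fintype Q := Fintype.ofFinite Q
  rw [Nat.card_eq_fintype_card]
  set ind : Q → (Fin (2*n) → ZMod 2) :=
    fun q => fun x => if Quotient.mk _ x = q then 1 else 0 with hind
  have horb : ∀ x : Fin (2*n),
      (Quotient.mk _ (x+1) : Q) = Quotient.mk _ (D.τ x) := by
    intro x
    apply Quotient.sound
    show (x+1) ∈ MulAction.orbit (Subgroup.zpowers D.boundary) (D.τ x)
    refine ⟨⟨D.boundary, Subgroup.mem_zpowers _⟩, ?_⟩
    show D.boundary (D.τ x) = x + 1
    show finRotate (2*n) (D.τ (D.τ x)) = x + 1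
    rw [D.invol, finRotate_apply']
  have hmem : ∀ q, ind q ∈ invSub D := by
    intro q x
    show (if (Quotient.mk _ (x+1) : Q) = q then (1:ZMod 2) else 0) = _
    rw [horb x]
  have hli : LinearIndependent (ZMod 2) ind := by
    rw [Fintype.linearIndependent_iff]
    intro g hg q
    have hq := congrFun hg (Quotient.out q)
    simp only [Finset.sum_apply, Pi.smul_apply, hind, smul_eq_mul, mul_ite, mul_one, mul_zero,
      Pi.zero_apply, Quotient.out_eq] at hq
    rwa [Finset.sum_ite_eq, if_pos (Finset.mem_univ q)] at hq
  have hli' : LinearIndependent (ZMod 2)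
      (fun q => (⟨ind q, hmem q⟩ : invSub D)) := by
    apply LinearIndependent.of_comp (invSub D).subtype
    exact hli
  exact hli'.fintype_card_le_finrank

lemma finrank_inv_le :
    Module.finrank (ZMod 2) (invSub D)
      ≤ 1 + Module.finrank (ZMod 2) (LinearMap.ker (interM D).mulVecLin) := by
  set K := LinearMap.ker (interM D).mulVecLin with hK
  let Ψ : invSub D →ₗ[ZMod 2] ZMod 2 × K :=
    { toFun := fun v => (v.1 0, ⟨fun s => v.1 s.1 + v.1 (D.τ s.1), by
        rw [hK, LinearMap.mem_ker, Matrix.mulVecLin_apply]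
        exact mem_ker D v.1 v.2⟩)
      map_add' := by
        intro a b
        refine Prod.ext rfl (Subtype.ext ?_)
        funext s
        show (a.1 + b.1) s.1 + (a.1 + b.1) (D.τ s.1) = _
        show _ = (a.1 s.1 + a.1 (D.τ s.1)) + (b.1 s.1 + b.1 (D.τ s.1))
        simp only [Pi.add_apply]
        ring
      map_smul' := by
        intro cc a
        refine Prod.ext rfl (Subtype.ext ?_)
        funext s
        show (cc • a.1) s.1 + (cc • a.1) (D.τ s.1) = cc • (a.1 s.1 + a.1 (D.τ s.1))
        simp only [Pi.smul_apply, smul_eq_mul]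
        ring }
  have hinj : Function.Injective Ψ := by
    rw [injective_iff_map_eq_zero]
    intro v hv0
    have h1 : v.1 0 = 0 := congrArg Prod.fst hv0
    have h2 : ∀ r : Rt D, v.1 r.1 + v.1 (D.τ r.1) = 0 := by
      intro r
      have := congrArg (fun p => (p.2 : Rt D → ZMod 2) r) hv0
      exact this
    exact Subtype.ext (inj_lemma D v.1 v.2 h1 h2)
  calc Module.finrank (ZMod 2) (invSub D)
      ≤ Module.finrank (ZMod 2) (ZMod 2 × K) :=
        LinearMap.finrank_le_finrank_of_injective hinj
    _ = 1 + Module.finrank (ZMod 2) K := by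
        rw [Module.finrank_prod, Module.finrank_self]

lemma interlaces_self_false (x : Fin (2*n)) : ¬ D.Interlaces x x := by
  unfold ChordDiagram.Interlaces
  rw [cyclicSbtw_iff, cyclicSbtw_iff]
  intro h
  rcases h with ⟨⟨h1, -⟩, -⟩ | ⟨⟨-, h2⟩, -⟩
  · simp [sub_self] at h1
  · omega

lemma interlaces_mate_right (x y : Fin (2*n)) :
    D.Interlaces x (D.τ y) ↔ D.Interlaces x y := by
  unfold ChordDiagram.Interlaces
  rw [D.invol]
  unfold Xor' Xor
  tauto

lemma interlaces_mate_left {x y : Fin (2*n)} (h1 : y ≠ x) (h2 : y ≠ D.τ x)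
    (h3 : D.τ y ≠ x) (h4 : D.τ y ≠ D.τ x) :
    D.Interlaces (D.τ x) y ↔ D.Interlaces x y := by
  unfold ChordDiagram.Interlaces
  rw [D.invol]
  rw [cyclicSbtw_reverse h1 h2 (fun h => D.fpf x h.symm)]
  rw [cyclicSbtw_reverse h3 h4 (fun h => D.fpf x h.symm)]
  unfold Xor' Xor
  tauto

end TorusAux

namespace TorusAux
open Finset Module
set_option linter.unusedSectionVars false

variable {n : ℕ} (D : ChordDiagram n) [NeZero (2*n)]

lemma sbtw_map {k : ℕ} [NeZero (2*k)] {f : Fin (2*k) → Fin (2*n)}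
    (hfinj : Function.Injective f)
    (hford : ∀ a b c, cyclicSbtw a b c → cyclicSbtw (f a) (f b) (f c))
    {a b c : Fin (2*k)} (h1 : b ≠ a) (h2 : c ≠ a) (h3 : b ≠ c) :
    cyclicSbtw (f a) (f b) (f c) ↔ cyclicSbtw a b c := by
  constructor
  · intro h
    by_contra hn
    rcases cyclicSbtw_trichotomy h1 h2 h3 with hx | hx
    · exact hn hx
    · exact cyclicSbtw_asymm (hford _ _ _ hx) h
  · exact hford _ _ _

lemma interlaces_map {k : ℕ} [NeZero (2*k)] {P : ChordDiagram k} {f : Fin (2*k) → Fin (2*n)}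
    (hfinj : Function.Injective f)
    (hford : ∀ a b c, cyclicSbtw a b c → cyclicSbtw (f a) (f b) (f c))
    (hfint : ∀ i, D.τ (f i) = f (P.τ i))
    {x y : Fin (2*k)} (h1 : y ≠ x) (h2 : y ≠ P.τ x) (h3 : P.τ y ≠ x) (h4 : P.τ y ≠ P.τ x) :
    D.Interlaces (f x) (f y) ↔ P.Interlaces x y := by
  unfold ChordDiagram.Interlaces
  rw [hfint x, hfint y]
  rw [sbtw_map hfinj hford h1 (P.fpf x) h2]
  rw [sbtw_map hfinj hford h3 (P.fpf x) h4]

lemma rank_ge (P : ChordDiagram 4) (c : Fin 4 → Fin (2*4))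
    (hcd : ∀ i j, i ≠ j → c i ≠ c j ∧ c i ≠ P.τ (c j))
    (hB : ∀ γ : Fin 4 → ZMod 2,
      Matrix.mulVec (fun i j => if P.Interlaces (c i) (c j) then (1:ZMod 2) else 0) γ = 0 →
        γ = 0)
    (hcon : D.Contains P) :
    4 ≤ Module.finrank (ZMod 2) (LinearMap.range (interM D).mulVecLin) := by
  haveI : NeZero (2*4) := ⟨by omega⟩
  obtain ⟨f, ⟨hfinj, hford⟩, hfint⟩ := hcon
  have hw : ∀ i : Fin 4, ∃ w : Rt D, w.1 = f (c i) ∨ w.1 = D.τ (f (c i)) := by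
    intro i
    rcases lt_trichotomy (f (c i)) (D.τ (f (c i))) with h | h | h
    · exact ⟨⟨f (c i), h⟩, Or.inl rfl⟩
    · exact absurd h.symm (D.fpf _)
    · exact ⟨⟨D.τ (f (c i)), by rw [D.invol]; exact h⟩, Or.inr rfl⟩
  choose w hwspec using hw
  -- distinctness facts for i ≠ j
  have hdist : ∀ i j : Fin 4, i ≠ j →
      f (c j) ≠ f (c i) ∧ f (c j) ≠ D.τ (f (c i)) ∧
      D.τ (f (c j)) ≠ f (c i) ∧ D.τ (f (c j)) ≠ D.τ (f (c i)) := by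
    intro i j hij
    obtain ⟨hne, hnetau⟩ := hcd j i (fun h => hij h.symm)
    refine ⟨fun h => hne (hfinj h), ?_, ?_, fun h => hne (hfinj (D.τ.injective h))⟩
    · rw [hfint]
      exact fun h => hnetau (hfinj h)
    · rw [hfint]
      intro h
      obtain ⟨hne', hnetau'⟩ := hcd i j hij
      exact hnetau' (hfinj h).symm
  -- bridge
  have hbridge : ∀ i j : Fin 4,
      interM D (w i) (w j) = if P.Interlaces (c i) (c j) then 1 else 0 := by
    intro i j
    rcases eq_or_ne i j with rfl | hij
    · rw [interM, if_neg (interlaces_self_false D _),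
        if_neg (interlaces_self_false P _)]
    · obtain ⟨hd1, hd2, hd3, hd4⟩ := hdist i j hij
      have step1 : D.Interlaces (w i).1 (w j).1 ↔ D.Interlaces (w i).1 (f (c j)) := by
        rcases hwspec j with hj | hj
        · rw [hj]
        · rw [hj, interlaces_mate_right]
      have step2 : D.Interlaces (w i).1 (f (c j)) ↔ D.Interlaces (f (c i)) (f (c j)) := by
        rcases hwspec i with hi | hi
        · rw [hi]
        · rw [hi, interlaces_mate_left D hd1 hd2 hd3 hd4]
      have step3 : D.Interlaces (f (c i)) (f (c j)) ↔ P.Interlaces (c i) (c j) := by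
        obtain ⟨he1, he2⟩ := hcd j i (fun h => hij h.symm)
        obtain ⟨he3, he4⟩ := hcd i j hij
        refine interlaces_map D hfinj hford hfint he1 he2 (fun h => he4 h.symm)
          (fun h => he1 (P.τ.injective h))
      rw [interM, if_congr (step1.trans (step2.trans step3)) rfl rfl]
  -- columns are independent elements of the range
  let col : Fin 4 → (Rt D → ZMod 2) := fun i => fun r => interM D r (w i)
  have hcolmem : ∀ i, col i ∈ LinearMap.range (interM D).mulVecLin := by
    intro i
    refine ⟨Pi.single (w i) 1, ?_⟩
    rw [Matrix.mulVecLin_apply, Matrix.mulVec_single]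
    funext r
    exact mul_one _
  have hli : LinearIndependent (ZMod 2) col := by
    rw [Fintype.linearIndependent_iff]
    intro g hg
    have hkey : ∀ i' : Fin 4,
        Matrix.mulVec (fun i j : Fin 4 => if P.Interlaces (c i) (c j) then (1:ZMod 2) else 0)
          g i' = 0 := by
      intro i'
      have := congrFun hg (w i')
      simp only [Finset.sum_apply, Pi.smul_apply, smul_eq_mul, Pi.zero_apply, col] at this
      show ∑ j : Fin 4, (if P.Interlaces (c i') (c j) then (1:ZMod 2) else 0) * g j = 0
      calc ∑ j : Fin 4, (if P.Interlaces (c i') (c j) then (1:ZMod 2) else 0) * g j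
          = ∑ j : Fin 4, g j * interM D (w i') (w j) :=
            Finset.sum_congr rfl (fun j _ => by rw [hbridge i' j, mul_comm])
        _ = 0 := this
    have := hB g (funext hkey)
    intro i
    rw [this]
    rfl
  have hli' : LinearIndependent (ZMod 2)
      (fun i => (⟨col i, hcolmem i⟩ : LinearMap.range (interM D).mulVecLin)) := by
    apply LinearIndependent.of_comp (LinearMap.range (interM D).mulVecLin).subtype
    exact hli
  have := hli'.fintype_card_le_finrank
  simpa using this

end TorusAux

namespace TorusAux

lemma core {n : ℕ} (hn : n ≠ 0) (D : ChordDiagram n) (P : ChordDiagram 4)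
    (c : Fin 4 → Fin (2*4))
    (hcd : ∀ i j, i ≠ j → c i ≠ c j ∧ c i ≠ P.τ (c j))
    (hB : ∀ γ : Fin 4 → ZMod 2,
      Matrix.mulVec (fun i j => if P.Interlaces (c i) (c j) then (1:ZMod 2) else 0) γ = 0 →
        γ = 0)
    (hcon : D.Contains P) :
    Nat.card (Quotient (MulAction.orbitRel (Subgroup.zpowers D.boundary) (Fin (2 * n)))) + 4
      ≤ n + 1 := by
  haveI : NeZero (2*n) := ⟨by omega⟩
  have h1 := card_orbits_le D
  have h2 := finrank_inv_le D
  have h3 := rank_ge D P c hcd hB hcon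
  have h4 := LinearMap.finrank_range_add_finrank_ker (interM D).mulVecLin
  rw [Module.finrank_fintype_fun_eq_card, card_Rt D] at h4
  omega

end TorusAux

/-- **(A ⇒ B).** If a chord diagram `D` of order `n` satisfies `n + 1 - F(D) ≤ 2` (i.e. the
associated hieroglyph is realizable on the torus), then `D` contains none of the four
forbidden diagrams `(ababcdcd)`, `(abcdabcd)`, `(abacdcbd)`, `(abcadbdc)`. -/
theorem torus_realizable_no_forbidden (n : ℕ) (D : ChordDiagram n)
    (hA : (n : ℤ) + 1 - (D.F : ℤ) ≤ 2) :
    ¬ D.Contains ChordDiagram.ababcdcd ∧ ¬ D.Contains ChordDiagram.abcdabcd ∧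
      ¬ D.Contains ChordDiagram.abacdcbd ∧ ¬ D.Contains ChordDiagram.abcadbdc := by
  have main : ∀ (P : ChordDiagram 4) (c : Fin 4 → Fin (2*4)),
      (∀ i j, i ≠ j → c i ≠ c j ∧ c i ≠ P.τ (c j)) →
      (∀ γ : Fin 4 → ZMod 2,
        Matrix.mulVec (fun i j => if P.Interlaces (c i) (c j) then (1:ZMod 2) else 0) γ = 0 →
          γ = 0) →
      ¬ D.Contains P := by
    intro P c hcd hB hcon
    rcases Nat.eq_zero_or_pos n with rfl | hn
    · obtain ⟨f, -, -⟩ := hcon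
      exact (f 0).elim0
    · have hcore := TorusAux.core hn.ne' D P c hcd hB hcon
      have hF : D.F = Nat.card
          (Quotient (MulAction.orbitRel (Subgroup.zpowers D.boundary) (Fin (2 * n)))) := by
        simp only [ChordDiagram.F, if_neg hn.ne']
      rw [hF] at hA
      omega
  exact ⟨main _ ![0,1,4,5] (by decide) (by decide),
    main _ ![0,1,2,3] (by decide) (by decide),
    main _ ![0,1,3,4] (by decide) (by decide),
    main _ ![0,1,2,4] (by decide) (by decide)⟩
end

section
/- Let G be a finite simple graph that contains none of 2K2 (two disjoint edges), K4, P4 (the path on four vertices), and the paw as subgraphs. Then G is a disjoint union of a (possibly empty) set of isolated vertices and a complete bipartite or complete tripartite graph (in fact, of a star K_{1,m} or a triangle K_{1,1,1}). -/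
/-- `G` contains `H` as a subgraph: there is an injective map of vertices sending
edges to edges. -/
def GraphContains {V W : Type*} (G : SimpleGraph V) (H : SimpleGraph W) : Prop :=
  ∃ f : W → V, Function.Injective f ∧ ∀ a b, H.Adj a b → G.Adj (f a) (f b)

/-- `2K2`: two disjoint edges, on the vertices `0, 1, 2, 3` with edges `01`, `23`. -/
def twoK2 : SimpleGraph (Fin 4) :=
  SimpleGraph.fromRel (fun a b => (a = 0 ∧ b = 1) ∨ (a = 2 ∧ b = 3))

/-- The paw: the graph on vertices `a = 0, b = 1, c = 2, d = 3` with edges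
`ab, ac, bc, bd` (a triangle with one pendant edge). -/
def pawGraph : SimpleGraph (Fin 4) :=
  SimpleGraph.fromRel (fun a b =>
    (a = 0 ∧ b = 1) ∨ (a = 0 ∧ b = 2) ∨ (a = 1 ∧ b = 2) ∨ (a = 1 ∧ b = 3))

section Helpers
variable {V : Type*} {G : SimpleGraph V}


lemma inj4 {a b c d : V} (h1 : a ≠ b) (h2 : a ≠ c) (h3 : a ≠ d) (h4 : b ≠ c)
    (h5 : b ≠ d) (h6 : c ≠ d) : Function.Injective (![a,b,c,d]) := by
  intro i j hij
  fin_cases i <;> fin_cases j <;> simp_all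

lemma make2K2 {a b c d : V} (hab : G.Adj a b) (hcd : G.Adj c d)
    (h2 : a ≠ c) (h3 : a ≠ d) (h4 : b ≠ c) (h5 : b ≠ d) :
    GraphContains G twoK2 := by
  refine ⟨![a,b,c,d], inj4 hab.ne h2 h3 h4 h5 hcd.ne, ?_⟩
  intro i j hij
  fin_cases i <;> fin_cases j <;> simp [twoK2] at hij <;>
    first | exact hab | exact hab.symm | exact hcd | exact hcd.symm

lemma makePaw {a b c d : V} (hab : G.Adj a b) (hac : G.Adj a c) (hbc : G.Adj b c)
    (hbd : G.Adj b d) (h3 : a ≠ d) (h6 : c ≠ d) :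
    GraphContains G pawGraph := by
  refine ⟨![a,b,c,d], inj4 hab.ne hac.ne h3 hbc.ne hbd.ne h6, ?_⟩
  intro i j hij
  fin_cases i <;> fin_cases j <;> simp [pawGraph] at hij <;>
    first | exact hab | exact hab.symm | exact hac | exact hac.symm
          | exact hbc | exact hbc.symm | exact hbd | exact hbd.symm

lemma makeP4 {a b c d : V} (hab : G.Adj a b) (hbc : G.Adj b c) (hcd : G.Adj c d)
    (h2 : a ≠ c) (h3 : a ≠ d) (h5 : b ≠ d) :
    GraphContains G (SimpleGraph.pathGraph 4) := by
  refine ⟨![a,b,c,d], inj4 hab.ne h2 h3 hbc.ne h5 hcd.ne, ?_⟩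
  intro i j hij
  rw [SimpleGraph.pathGraph_adj] at hij
  fin_cases i <;> fin_cases j <;> simp at hij ⊢ <;>
    first | exact hab | exact hab.symm | exact hbc | exact hbc.symm
          | exact hcd | exact hcd.symm


lemma star_case (c : V) (hc : ∀ v w, G.Adj v w → v = c ∨ w = c) :
    IsIsolatedPlusCompleteMultipartite G := by
  refine ⟨{c}, {v | G.Adj c v}, ∅, ?_, by simp, by simp, ?_⟩
  · rw [Set.disjoint_left]
    rintro v rfl h
    exact G.irrefl h
  · intro v w
    simp only [Set.mem_singleton_iff, Set.mem_setOf_eq, Set.mem_empty_iff_false,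
      and_false, false_and, or_false]
    constructor
    · intro hvw
      rcases hc v w hvw with rfl | rfl
      · exact Or.inl ⟨rfl, hvw⟩
      · exact Or.inr ⟨hvw.symm, rfl⟩
    · rintro (⟨rfl, h⟩ | ⟨h, rfl⟩)
      · exact h
      · exact h.symm


end Helpers

/-- Let `G` be a finite simple graph containing none of `2K2`, `K₄`, `P₄` (the path on four
vertices) and the paw as subgraphs. Then `G` is a disjoint union of a (possibly empty) set
of isolated vertices and a complete bipartite or complete tripartite graph. -/
theorem no_forbidden_subgraphs_multipartite {V : Type*} [Fintype V] (G : SimpleGraph V)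
    (h1 : ¬ GraphContains G twoK2)
    (h2 : ¬ GraphContains G (SimpleGraph.completeGraph (Fin 4)))
    (h3 : ¬ GraphContains G (SimpleGraph.pathGraph 4))
    (h4 : ¬ GraphContains G pawGraph) :
    IsIsolatedPlusCompleteMultipartite G := by
  by_cases hE : ∃ x y, G.Adj x y
  case neg =>
    refine ⟨∅, ∅, ∅, by simp, by simp, by simp, ?_⟩
    intro v w
    simp only [Set.mem_empty_iff_false, false_and, and_false, or_self, iff_false]
    exact fun h => hE ⟨v, w, h⟩
  obtain ⟨x, y, hxy⟩ := hE
  by_cases hz : ∃ z, G.Adj x z ∧ G.Adj y z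
  · -- triangle case
    obtain ⟨z, hxz, hyz⟩ := hz
    have hmem : ∀ v w, G.Adj v w → v = x ∨ v = y ∨ v = z := by
      intro v w hvw
      by_contra hcon
      push_neg at hcon
      obtain ⟨hvx, hvy, hvz⟩ := hcon
      by_cases hw : w = x ∨ w = y ∨ w = z
      · rcases hw with hw | hw | hw
        · exact h4 (makePaw hxy.symm hyz hxz (hw ▸ hvw.symm) (Ne.symm hvy) (Ne.symm hvz))
        · exact h4 (makePaw hxy hxz hyz (hw ▸ hvw.symm) (Ne.symm hvx) (Ne.symm hvz))
        · exact h4 (makePaw hxz hxy hyz.symm (hw ▸ hvw.symm) (Ne.symm hvx) (Ne.symm hvy))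
      · push_neg at hw
        exact h1 (make2K2 hxy hvw (Ne.symm hvx) (Ne.symm hw.1) (Ne.symm hvy)
          (Ne.symm hw.2.1))
    refine ⟨{x}, {y}, {z}, ?_, ?_, ?_, ?_⟩
    · simpa using hxy.ne
    · simpa using hxz.ne
    · simpa using hyz.ne
    intro v w
    simp only [Set.mem_singleton_iff]
    constructor
    · intro hvw
      have hv := hmem v w hvw
      have hw := hmem w v hvw.symm
      have hne := hvw.ne
      rcases hv with rfl | rfl | rfl <;> rcases hw with rfl | rfl | rfl <;> tauto
    · rintro (⟨rfl, rfl⟩ | ⟨rfl, rfl⟩ | ⟨rfl, rfl⟩ | ⟨rfl, rfl⟩ | ⟨rfl, rfl⟩ | ⟨rfl, rfl⟩)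
      · exact hxy
      · exact hxy.symm
      · exact hxz
      · exact hxz.symm
      · exact hyz
      · exact hyz.symm
  · -- star case
    have hcen : (∀ v w, G.Adj v w → v = x ∨ w = x) ∨ (∀ v w, G.Adj v w → v = y ∨ w = y) := by
      by_contra hcon
      push_neg at hcon
      obtain ⟨⟨a, b, hab, ha, hb⟩, ⟨c, d, hcd, hc, hd⟩⟩ := hcon
      -- one of a, b equals y
      have hu : ∃ u, G.Adj y u ∧ u ≠ x := by
        by_cases hay : a = y
        · exact ⟨b, hay ▸ hab, hb⟩
        by_cases hby : b = y
        · exact ⟨a, (hby ▸ hab).symm, ha⟩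
        · exact absurd (make2K2 hxy hab (Ne.symm ha) (Ne.symm hb) (Ne.symm hay)
            (Ne.symm hby)) h1
      have ht : ∃ t, G.Adj x t ∧ t ≠ y := by
        by_cases hcx : c = x
        · exact ⟨d, hcx ▸ hcd, hd⟩
        by_cases hdx : d = x
        · exact ⟨c, (hdx ▸ hcd).symm, hc⟩
        · exact absurd (make2K2 hxy hcd (Ne.symm hcx) (Ne.symm hdx) (Ne.symm hc)
            (Ne.symm hd)) h1
      obtain ⟨u, hyu, hux⟩ := hu
      obtain ⟨t, hxt, hty⟩ := ht
      by_cases htu : t = u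
      · exact hz ⟨u, htu ▸ hxt, hyu⟩
      · exact h3 (makeP4 hxt.symm hxy hyu hty htu (Ne.symm hux))
    rcases hcen with hc | hc
    · exact star_case x hc
    · exact star_case y hc
end
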